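/- Let K ≤ M(2,q) be an imprimitive subgroup of cube-free order m with p ∤ m. Then there exist a subgroup L of K with L ≤ D(2,q) and L normal in K, and an element x ∈ K with x ∉ D(2,q), such that the order of x is 2 or 4, K is generated by L together with x, and L ∩ ⟨x⟩ is trivial (so K = L ⋊ ⟨x⟩). -/
import Mathlib


open Matrix

/-- A positive integer is cube-free if no prime cube divides it. -/
def CubeFree (m : ℕ) : Prop := ∀ r : ℕ, r.Prime → ¬ r ^ 3 ∣ m

/-- A 2×2 matrix is diagonal. -/
def IsDiag2 {F : Type} [Field F] (A : Matrix (Fin 2) (Fin 2) F) : Prop :=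
  A 0 1 = 0 ∧ A 1 0 = 0

/-- A 2×2 matrix is anti-diagonal. -/
def IsAnti2 {F : Type} [Field F] (A : Matrix (Fin 2) (Fin 2) F) : Prop :=
  A 0 0 = 0 ∧ A 1 1 = 0

/-- `D(2,q)`: the subgroup of invertible diagonal matrices in `GL(2,F)`. -/
def Dsub (F : Type) [Field F] : Subgroup (GL (Fin 2) F) where
  carrier := {g | IsDiag2 (g : Matrix (Fin 2) (Fin 2) F)}
  one_mem' := by constructor <;> simp
  mul_mem' := by
    rintro a b ⟨ha1, ha2⟩ ⟨hb1, hb2⟩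
    constructor <;>
      simp [Units.val_mul, Matrix.mul_apply, Fin.sum_univ_two, ha1, ha2, hb1, hb2]
  inv_mem' := by
    rintro g ⟨h1, h2⟩
    have hAB : (g : Matrix (Fin 2) (Fin 2) F) * ((g⁻¹ : GL (Fin 2) F) : Matrix (Fin 2) (Fin 2) F) = 1 := by
      exact_mod_cast g.mul_inv
    have hdet : (g : Matrix (Fin 2) (Fin 2) F).det ≠ 0 := by
      have : IsUnit (g : Matrix (Fin 2) (Fin 2) F) := ⟨g, rfl⟩
      exact ((Matrix.isUnit_iff_isUnit_det _).mp this).ne_zero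
    rw [Matrix.det_fin_two, h1, h2] at hdet
    simp only [zero_mul, mul_zero, sub_zero] at hdet
    have h00 : (g : Matrix (Fin 2) (Fin 2) F) 0 0 ≠ 0 := left_ne_zero_of_mul hdet
    have h11 : (g : Matrix (Fin 2) (Fin 2) F) 1 1 ≠ 0 := right_ne_zero_of_mul hdet
    have e01 := congrFun (congrFun hAB 0) 1
    have e10 := congrFun (congrFun hAB 1) 0
    simp [Matrix.mul_apply, Fin.sum_univ_two, h1, h2, Matrix.one_apply] at e01 e10
    constructor <;> rw [Matrix.coe_units_inv]
    · rcases e01 with h | h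
      · exact absurd h h00
      · exact h
    · rcases e10 with h | h
      · exact absurd h h11
      · exact h

section Msub
variable {F : Type} [Field F]

lemma IsDiag2.mul2 {A B : Matrix (Fin 2) (Fin 2) F} (hA : IsDiag2 A) (hB : IsDiag2 B) :
    IsDiag2 (A * B) := by
  obtain ⟨a1, a2⟩ := hA; obtain ⟨b1, b2⟩ := hB
  constructor <;> simp [Matrix.mul_apply, Fin.sum_univ_two, a1, a2, b1, b2]

lemma IsDiag2.mul_anti {A B : Matrix (Fin 2) (Fin 2) F} (hA : IsDiag2 A) (hB : IsAnti2 B) :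
    IsAnti2 (A * B) := by
  obtain ⟨a1, a2⟩ := hA; obtain ⟨b1, b2⟩ := hB
  constructor <;> simp [Matrix.mul_apply, Fin.sum_univ_two, a1, a2, b1, b2]

lemma IsAnti2.mul_diag {A B : Matrix (Fin 2) (Fin 2) F} (hA : IsAnti2 A) (hB : IsDiag2 B) :
    IsAnti2 (A * B) := by
  obtain ⟨a1, a2⟩ := hA; obtain ⟨b1, b2⟩ := hB
  constructor <;> simp [Matrix.mul_apply, Fin.sum_univ_two, a1, a2, b1, b2]

lemma IsAnti2.mul_anti {A B : Matrix (Fin 2) (Fin 2) F} (hA : IsAnti2 A) (hB : IsAnti2 B) :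
    IsDiag2 (A * B) := by
  obtain ⟨a1, a2⟩ := hA; obtain ⟨b1, b2⟩ := hB
  constructor <;> simp [Matrix.mul_apply, Fin.sum_univ_two, a1, a2, b1, b2]

/-- `M(2,q)`: the subgroup of monomial matrices (diagonal or anti-diagonal) in `GL(2,F)`. -/
def Msub (F : Type) [Field F] : Subgroup (GL (Fin 2) F) where
  carrier := {g | IsDiag2 (g : Matrix (Fin 2) (Fin 2) F) ∨ IsAnti2 (g : Matrix (Fin 2) (Fin 2) F)}
  one_mem' := by left; constructor <;> simp
  mul_mem' := by
    rintro a b (ha | ha) (hb | hb)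
    · left; have := ha.mul2 hb; simpa [Units.val_mul] using this
    · right; have := ha.mul_anti hb; simpa [Units.val_mul] using this
    · right; have := ha.mul_diag hb; simpa [Units.val_mul] using this
    · left; have := ha.mul_anti hb; simpa [Units.val_mul] using this
  inv_mem' := by
    rintro g (⟨h1, h2⟩ | ⟨h1, h2⟩)
    · left
      have hAB : (g : Matrix (Fin 2) (Fin 2) F) * ((g⁻¹ : GL (Fin 2) F) : Matrix (Fin 2) (Fin 2) F) = 1 := by
        exact_mod_cast g.mul_inv
      have hdet : (g : Matrix (Fin 2) (Fin 2) F).det ≠ 0 := by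
        have : IsUnit (g : Matrix (Fin 2) (Fin 2) F) := ⟨g, rfl⟩
        exact ((Matrix.isUnit_iff_isUnit_det _).mp this).ne_zero
      rw [Matrix.det_fin_two, h1, h2] at hdet
      simp only [zero_mul, mul_zero, sub_zero] at hdet
      have h00 : (g : Matrix (Fin 2) (Fin 2) F) 0 0 ≠ 0 := left_ne_zero_of_mul hdet
      have h11 : (g : Matrix (Fin 2) (Fin 2) F) 1 1 ≠ 0 := right_ne_zero_of_mul hdet
      have e01 := congrFun (congrFun hAB 0) 1
      have e10 := congrFun (congrFun hAB 1) 0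
      simp [Matrix.mul_apply, Fin.sum_univ_two, h1, h2, Matrix.one_apply] at e01 e10
      constructor <;> rw [Matrix.coe_units_inv]
      · rcases e01 with h | h
        · exact absurd h h00
        · exact h
      · rcases e10 with h | h
        · exact absurd h h11
        · exact h
    · right
      have hAB : (g : Matrix (Fin 2) (Fin 2) F) * ((g⁻¹ : GL (Fin 2) F) : Matrix (Fin 2) (Fin 2) F) = 1 := by
        exact_mod_cast g.mul_inv
      have hdet : (g : Matrix (Fin 2) (Fin 2) F).det ≠ 0 := by
        have : IsUnit (g : Matrix (Fin 2) (Fin 2) F) := ⟨g, rfl⟩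
        exact ((Matrix.isUnit_iff_isUnit_det _).mp this).ne_zero
      rw [Matrix.det_fin_two, h1, h2] at hdet
      simp only [zero_mul, mul_zero, zero_sub, neg_ne_zero] at hdet
      have h01 : (g : Matrix (Fin 2) (Fin 2) F) 0 1 ≠ 0 := left_ne_zero_of_mul hdet
      have h10 : (g : Matrix (Fin 2) (Fin 2) F) 1 0 ≠ 0 := right_ne_zero_of_mul hdet
      have e01 := congrFun (congrFun hAB 0) 1
      have e10 := congrFun (congrFun hAB 1) 0
      simp [Matrix.mul_apply, Fin.sum_univ_two, h1, h2, Matrix.one_apply] at e01 e10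
      constructor <;> rw [Matrix.coe_units_inv]
      · rcases e10 with h | h
        · exact absurd h h10
        · exact h
      · rcases e01 with h | h
        · exact absurd h h01
        · exact h

end Msub

section RepDefs
variable (F : Type) [Field F]

/-- A subgroup of `GL(2,F)` is reducible if some nonzero proper subspace of `F²` is
invariant under all its elements. -/
def Reducible (K : Subgroup (GL (Fin 2) F)) : Prop :=
  ∃ W : Submodule F (Fin 2 → F), W ≠ ⊥ ∧ W ≠ ⊤ ∧
    ∀ g ∈ K, ∀ v ∈ W, Matrix.mulVec (g : Matrix (Fin 2) (Fin 2) F) v ∈ W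

/-- `K` permutes the pair of one-dimensional subspaces `V₁, V₂` decomposing `F²`. -/
def ImprimitiveOn (K : Subgroup (GL (Fin 2) F)) (V₁ V₂ : Submodule F (Fin 2 → F)) : Prop :=
  Module.finrank F V₁ = 1 ∧ Module.finrank F V₂ = 1 ∧ IsCompl V₁ V₂ ∧
  ∀ g ∈ K,
    (V₁.map (Matrix.mulVecLin (g : Matrix (Fin 2) (Fin 2) F)) = V₁ ∧
     V₂.map (Matrix.mulVecLin (g : Matrix (Fin 2) (Fin 2) F)) = V₂) ∨
    (V₁.map (Matrix.mulVecLin (g : Matrix (Fin 2) (Fin 2) F)) = V₂ ∧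
     V₂.map (Matrix.mulVecLin (g : Matrix (Fin 2) (Fin 2) F)) = V₁)

/-- An irreducible subgroup of `GL(2,F)` is imprimitive if it permutes a pair of
one-dimensional subspaces decomposing `F²`. -/
def Imprimitive (K : Subgroup (GL (Fin 2) F)) : Prop :=
  ¬ Reducible F K ∧ ∃ V₁ V₂ : Submodule F (Fin 2 → F), ImprimitiveOn F K V₁ V₂

/-- An irreducible subgroup of `GL(2,F)` is primitive if it is not imprimitive. -/
def Primitive (K : Subgroup (GL (Fin 2) F)) : Prop :=
  ¬ Reducible F K ∧ ¬ ∃ V₁ V₂ : Submodule F (Fin 2 → F), ImprimitiveOn F K V₁ V₂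

end RepDefs

/-- Two subgroups are conjugate. -/
def IsConjugate {G : Type*} [Group G] (K₁ K₂ : Subgroup G) : Prop :=
  ∃ g : G, Subgroup.map (MulAut.conj g).toMonoidHom K₁ = K₂

section MainHelpers

variable {F : Type} [Field F]

lemma gl_not_diag_and_anti (g : GL (Fin 2) F)
    (hd : IsDiag2 (g : Matrix (Fin 2) (Fin 2) F))
    (ha : IsAnti2 (g : Matrix (Fin 2) (Fin 2) F)) : False := by
  have hdet : (g : Matrix (Fin 2) (Fin 2) F).det ≠ 0 := by
    have : IsUnit (g : Matrix (Fin 2) (Fin 2) F) := ⟨g, rfl⟩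
    exact ((Matrix.isUnit_iff_isUnit_det _).mp this).ne_zero
  rw [Matrix.det_fin_two, ha.1, ha.2, hd.1] at hdet
  simp at hdet

lemma gl_anti_mul_anti {g h : GL (Fin 2) F}
    (hg : IsAnti2 (g : Matrix (Fin 2) (Fin 2) F))
    (hh : IsAnti2 (h : Matrix (Fin 2) (Fin 2) F)) : g * h ∈ Dsub F := by
  have := hg.mul_anti hh
  show IsDiag2 ((g * h : GL (Fin 2) F) : Matrix (Fin 2) (Fin 2) F)
  simpa [Units.val_mul] using this

lemma gl_diag_mul_anti {g h : GL (Fin 2) F}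
    (hg : g ∈ Dsub F) (hh : IsAnti2 (h : Matrix (Fin 2) (Fin 2) F)) :
    IsAnti2 ((g * h : GL (Fin 2) F) : Matrix (Fin 2) (Fin 2) F) := by
  have := (IsDiag2.mul_anti hg hh)
  simpa [Units.val_mul] using this

lemma gl_anti_mul_diag {g h : GL (Fin 2) F}
    (hg : IsAnti2 (g : Matrix (Fin 2) (Fin 2) F)) (hh : h ∈ Dsub F) :
    IsAnti2 ((g * h : GL (Fin 2) F) : Matrix (Fin 2) (Fin 2) F) := by
  have := (IsAnti2.mul_diag hg hh)
  simpa [Units.val_mul] using this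

lemma gl_inv_anti {g : GL (Fin 2) F}
    (hg : IsAnti2 (g : Matrix (Fin 2) (Fin 2) F)) :
    IsAnti2 ((g⁻¹ : GL (Fin 2) F) : Matrix (Fin 2) (Fin 2) F) := by
  have hmem : g⁻¹ ∈ Msub F := (Msub F).inv_mem (Or.inr hg)
  rcases hmem with hd | ha
  · exfalso
    have h1 : IsAnti2 ((g * g⁻¹ : GL (Fin 2) F) : Matrix (Fin 2) (Fin 2) F) :=
      gl_anti_mul_diag hg hd
    rw [mul_inv_cancel] at h1
    have : ((1 : GL (Fin 2) F) : Matrix (Fin 2) (Fin 2) F) 0 0 = 0 := h1.1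
    simp [Units.val_one, Matrix.one_apply] at this
  · exact ha

lemma gl_comm_diag {g h : GL (Fin 2) F} (hg : g ∈ Dsub F) (hh : h ∈ Dsub F) :
    g * h = h * g := by
  obtain ⟨g1, g2⟩ := hg
  obtain ⟨h1, h2⟩ := hh
  ext i j
  fin_cases i <;> fin_cases j <;>
    simp [Units.val_mul, Matrix.mul_apply, Fin.sum_univ_two, g1, g2, h1, h2, mul_comm]

lemma gl_pow_anti {g : GL (Fin 2) F}
    (hg : IsAnti2 (g : Matrix (Fin 2) (Fin 2) F)) (k : ℕ) (hk : k % 2 = 1) :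
    IsAnti2 ((g ^ k : GL (Fin 2) F) : Matrix (Fin 2) (Fin 2) F) := by
  obtain ⟨j, rfl⟩ : ∃ j, k = 2 * j + 1 := ⟨k / 2, by omega⟩
  have h2 : g ^ 2 ∈ Dsub F := by
    rw [pow_two]; exact gl_anti_mul_anti hg hg
  have hpow : g ^ (2 * j) ∈ Dsub F := by
    rw [pow_mul]; exact pow_mem h2 j
  have : g ^ (2 * j + 1) = g ^ (2 * j) * g := by rw [pow_succ]
  rw [this]
  exact gl_diag_mul_anti hpow hg

lemma klein_four_dvd {G : Type*} [Group G] (H : Subgroup G) (a b : G)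
    (haH : a ∈ H) (hbH : b ∈ H) (hcomm : a * b = b * a)
    (ha2 : a * a = 1) (hb2 : b * b = 1) (ha1 : a ≠ 1) (hb1 : b ≠ 1) (hab : a ≠ b) :
    4 ∣ Nat.card H := by
  classical
  have hA : ∀ z, a * (a * z) = z := fun z => by rw [← mul_assoc, ha2, one_mul]
  have hB : ∀ z, b * (b * z) = z := fun z => by rw [← mul_assoc, hb2, one_mul]
  have h1' : b * (a * b) = a := by rw [hcomm, ← mul_assoc, hb2, one_mul]
  have h2' : a * b * a = b := by rw [mul_assoc, ← hcomm, ← mul_assoc, ha2, one_mul]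
  have h3' : a * b * (a * b) = 1 := by rw [mul_assoc, h1', ha2]
  have h4' : a * b * b = a := by rw [mul_assoc, hb2, mul_one]
  have hainv : a⁻¹ = a := by rw [← mul_one a⁻¹, ← ha2, ← mul_assoc, inv_mul_cancel, one_mul]
  have hbinv : b⁻¹ = b := by rw [← mul_one b⁻¹, ← hb2, ← mul_assoc, inv_mul_cancel, one_mul]
  have habinv : (a * b)⁻¹ = a * b := by
    rw [← mul_one (a*b)⁻¹, ← h3', ← mul_assoc, inv_mul_cancel, one_mul]
  let S : Subgroup G :=
    { carrier := {1, a, b, a * b}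
      one_mem' := Or.inl rfl
      mul_mem' := by
        rintro x y hx hy
        simp only [Set.mem_insert_iff, Set.mem_singleton_iff] at hx hy ⊢
        rcases hx with rfl | rfl | rfl | rfl <;> rcases hy with rfl | rfl | rfl | rfl <;>
          simp [ha2, hb2, hA, hB, h1', h2', h3', h4', hcomm.symm]
      inv_mem' := by
        rintro x hx
        simp only [Set.mem_insert_iff, Set.mem_singleton_iff] at hx ⊢
        rcases hx with rfl | rfl | rfl | rfl <;>
          simp [hainv, hbinv, habinv] }
  have hSH : S ≤ H := by
    rintro x (rfl | rfl | rfl | rfl)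
    · exact one_mem H
    · exact haH
    · exact hbH
    · exact mul_mem haH hbH
  have hab1 : a * b ≠ 1 := by
    intro h
    apply hab
    rw [← mul_one a, ← h, ← mul_assoc, ha2, one_mul]
  have haab : a ≠ a * b := by
    intro h
    apply hb1
    have := hA b
    rw [← h] at this
    rw [← this, ha2]
  have hbab : b ≠ a * b := by
    intro h
    apply ha1
    have : b * b = b * (a * b) := by rw [← h]
    rw [hb2, h1'] at this
    exact this.symm
  have hcardS : Nat.card S = 4 := by
    have he : Nat.card S = ({1, a, b, a * b} : Set G).ncard := by
      rw [← Nat.card_coe_set_eq]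
      rfl
    rw [he]
    rw [Set.ncard_insert_of_notMem (by simp [ha1.symm, hb1.symm, hab1.symm])
        (Set.toFinite _)]
    rw [Set.ncard_insert_of_notMem (by simp [hab, haab])
        (Set.toFinite _)]
    rw [Set.ncard_insert_of_notMem (by simp [hbab]) (Set.finite_singleton _)]
    rw [Set.ncard_singleton]
  calc (4 : ℕ) = Nat.card S := hcardS.symm
    _ ∣ Nat.card H := Subgroup.card_dvd_of_le hSH

lemma mem_closure_of_sq {G : Type*} [Group G] {x g : G} (hx2 : x ^ 2 = 1)
    (hg : g ∈ Subgroup.closure {x}) : g = 1 ∨ g = x := by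
  obtain ⟨j, rfl⟩ := Subgroup.mem_closure_singleton.mp hg
  have hz2 : x ^ (2 : ℤ) = 1 := by
    rw [show (2 : ℤ) = ((2 : ℕ) : ℤ) by norm_num, zpow_natCast, hx2]
  rcases Int.even_or_odd j with ⟨t, rfl⟩ | ⟨t, rfl⟩
  · left
    rw [show t + t = 2 * t by ring, _root_.zpow_mul, hz2, _root_.one_zpow]
  · right
    rw [_root_.zpow_add, _root_.zpow_mul, hz2, _root_.one_zpow, one_mul, zpow_one]

end MainHelpers

/-- An imprimitive subgroup `K ≤ M(2,q)` of cube-free order coprime to `p` decomposes as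
`K = L ⋊ ⟨x⟩` with `L ≤ D(2,q)` normal in `K` and `x ∈ K ∖ D(2,q)` of order 2 or 4. -/
theorem imprimitive_monomial_decomposition
    (p k₀ : ℕ) (hp : p.Prime) (hk₀ : 1 ≤ k₀)
    (F : Type) [Field F] [Fintype F] (hF : Fintype.card F = p ^ k₀)
    (K : Subgroup (GL (Fin 2) F)) (hKM : K ≤ Msub F) (himp : Imprimitive F K)
    (m : ℕ) (hm : Nat.card ↥K = m) (hcf : CubeFree m) (hpm : ¬ p ∣ m) :
    ∃ (L : Subgroup (GL (Fin 2) F)) (x : GL (Fin 2) F),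
      L ≤ K ∧ L ≤ Dsub F ∧ (∀ k ∈ K, ∀ l ∈ L, k * l * k⁻¹ ∈ L) ∧
      x ∈ K ∧ x ∉ Dsub F ∧ (orderOf x = 2 ∨ orderOf x = 4) ∧
      L ⊔ Subgroup.closure {x} = K ∧ L ⊓ Subgroup.closure {x} = ⊥ := by
  classical
  have hm0 : m ≠ 0 := by
    rintro rfl
    exact hcf 2 Nat.prime_two (dvd_zero _)
  have hKfin : Finite ↥K := Nat.finite_of_card_ne_zero (by rw [hm]; exact hm0)
  have hy : ∃ y ∈ K, y ∉ Dsub F := by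
    by_contra hcon
    push_neg at hcon
    apply himp.1
    refine ⟨LinearMap.ker (LinearMap.proj (R := F) (φ := fun _ : Fin 2 => F) 1), ?_, ?_, ?_⟩
    · intro hbot
      have h1 : (![1, 0] : Fin 2 → F) ∈
          LinearMap.ker (LinearMap.proj (R := F) (φ := fun _ : Fin 2 => F) 1) := by
        simp [LinearMap.mem_ker]
      rw [hbot, Submodule.mem_bot] at h1
      have := congrFun h1 0
      simp at this
    · intro htop
      have h1 : (![0, 1] : Fin 2 → F) ∈
          LinearMap.ker (LinearMap.proj (R := F) (φ := fun _ : Fin 2 => F) 1) := by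
        rw [htop]; trivial
      simp [LinearMap.mem_ker] at h1
    · intro g hg v hv
      obtain ⟨g1, g2⟩ := hcon g hg
      simp only [LinearMap.mem_ker, LinearMap.proj_apply] at hv ⊢
      simp [Matrix.mulVec, dotProduct, Fin.sum_univ_two, g2, hv]
  obtain ⟨y, hyK, hyD⟩ := hy
  have antiOf : ∀ g : GL (Fin 2) F, g ∈ K → g ∉ Dsub F →
      IsAnti2 ((g : GL (Fin 2) F) : Matrix (Fin 2) (Fin 2) F) :=
    fun g hg hgD => (hKM hg).resolve_left hgD
  have hyA := antiOf y hyK hyD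
  have hconj : ∀ k ∈ K, ∀ l ∈ K ⊓ Dsub F, k * l * k⁻¹ ∈ K ⊓ Dsub F := by
    intro k hk l hl
    obtain ⟨hlK, hlD⟩ := Subgroup.mem_inf.mp hl
    refine Subgroup.mem_inf.mpr ⟨mul_mem (mul_mem hk hlK) (inv_mem hk), ?_⟩
    by_cases hkD : k ∈ Dsub F
    · exact mul_mem (mul_mem hkD hlD) ((Dsub F).inv_mem hkD)
    · have hkA := antiOf k hk hkD
      exact gl_anti_mul_anti (gl_anti_mul_diag hkA hlD) (gl_inv_anti hkA)
  have hyd : orderOf y ∣ m := by rw [← hm]; exact Subgroup.orderOf_dvd_natCard K hyK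
  have hypos : orderOf y ≠ 0 := by
    intro h0
    rw [h0] at hyd
    exact hm0 (Nat.zero_dvd.mp hyd)
  have hy2D : y ^ 2 ∈ Dsub F := by rw [pow_two]; exact gl_anti_mul_anti hyA hyA
  have hyeven : orderOf y % 2 = 0 := by
    by_contra h
    obtain ⟨j, hj⟩ : ∃ j, orderOf y = 2 * j + 1 := ⟨orderOf y / 2, by omega⟩
    have h1 : y ^ (2 * j) * y = 1 := by
      rw [← pow_succ, ← hj, pow_orderOf_eq_one]
    apply hyD
    have h2 : y = (y ^ (2 * j))⁻¹ := eq_inv_of_mul_eq_one_right h1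
    rw [h2]
    exact (Dsub F).inv_mem (by rw [pow_mul]; exact pow_mem hy2D j)
  obtain ⟨s, hns⟩ : ∃ s, orderOf y = 2 * s := ⟨orderOf y / 2, by omega⟩
  have hspos : s ≠ 0 := by omega
  by_cases hsodd : s % 2 = 1
  · -- x := y ^ s has order 2
    have hxK : y ^ s ∈ K := pow_mem hyK s
    have hxA := gl_pow_anti hyA s hsodd
    have hxD : y ^ s ∉ Dsub F := fun h => gl_not_diag_and_anti (y ^ s) h hxA
    have hxord : orderOf (y ^ s) = 2 := by
      rw [orderOf_pow, hns]
      rw [Nat.gcd_eq_right ⟨2, by ring⟩, Nat.mul_div_cancel _ (Nat.pos_of_ne_zero hspos)]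
    have hx2 : (y ^ s) ^ 2 = 1 := by
      have h := pow_orderOf_eq_one (y ^ s); rwa [hxord] at h
    refine ⟨K ⊓ Dsub F, y ^ s, inf_le_left, inf_le_right, hconj, hxK, hxD, Or.inl hxord, ?_, ?_⟩
    · apply le_antisymm
      · exact sup_le inf_le_left
          ((Subgroup.closure_le K).mpr (Set.singleton_subset_iff.mpr hxK))
      · intro k hk
        by_cases hkD : k ∈ Dsub F
        · exact Subgroup.mem_sup_left (Subgroup.mem_inf.mpr ⟨hk, hkD⟩)
        · have hkA := antiOf k hk hkD
          have h1 : k * y ^ s ∈ K ⊓ Dsub F :=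
            Subgroup.mem_inf.mpr ⟨mul_mem hk hxK, gl_anti_mul_anti hkA hxA⟩
          have h2 : k = (k * y ^ s) * (y ^ s)⁻¹ := by group
          rw [h2]
          exact mul_mem (Subgroup.mem_sup_left h1)
            (Subgroup.mem_sup_right (inv_mem (Subgroup.mem_closure_singleton_self _)))
    · rw [Subgroup.eq_bot_iff_forall]
      intro g hg
      rw [Subgroup.mem_inf] at hg
      obtain ⟨hgL, hgC⟩ := hg
      rcases mem_closure_of_sq hx2 hgC with rfl | rfl
      · rfl
      · exact absurd (Subgroup.mem_inf.mp hgL).2 hxD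
  · -- 4 divides the order of y
    have hseven : s % 2 = 0 := by omega
    obtain ⟨u, hsu⟩ : ∃ u, s = 2 * u := ⟨s / 2, by omega⟩
    have hn4 : orderOf y = 4 * u := by omega
    have hupos : u ≠ 0 := by omega
    have huodd : u % 2 = 1 := by
      by_contra h
      obtain ⟨w, hw⟩ : ∃ w, u = 2 * w := ⟨u / 2, by omega⟩
      have h8 : (8 : ℕ) ∣ m :=
        dvd_trans (show (8:ℕ) ∣ orderOf y from by rw [hn4, hw]; exact ⟨w, by ring⟩) hyd
      exact hcf 2 Nat.prime_two ((by norm_num : (2:ℕ) ^ 3 = 8) ▸ h8)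
    have hxK : y ^ u ∈ K := pow_mem hyK u
    have hxA := gl_pow_anti hyA u huodd
    have hxD : y ^ u ∉ Dsub F := fun h => gl_not_diag_and_anti (y ^ u) h hxA
    have hxord : orderOf (y ^ u) = 4 := by
      rw [orderOf_pow, hn4]
      rw [Nat.gcd_eq_right ⟨4, by ring⟩, Nat.mul_div_cancel _ (Nat.pos_of_ne_zero hupos)]
    have hx4 : (y ^ u) ^ 4 = 1 := by
      have h := pow_orderOf_eq_one (y ^ u); rwa [hxord] at h
    have hx2D : (y ^ u) ^ 2 ∈ Dsub F := by rw [pow_two]; exact gl_anti_mul_anti hxA hxA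
    have hx2K : (y ^ u) ^ 2 ∈ K := pow_mem hxK 2
    have hx2ne : (y ^ u) ^ 2 ≠ 1 := by
      intro h
      have h2 := orderOf_dvd_iff_pow_eq_one.mpr h
      rw [hxord] at h2
      exact absurd h2 (by norm_num)
    have h4m : (4 : ℕ) ∣ m := by
      rw [← hxord, ← hm]; exact Subgroup.orderOf_dvd_natCard K hxK
    have h8m : ¬ (8 : ℕ) ∣ m := fun h => hcf 2 Nat.prime_two ((by norm_num : (2:ℕ) ^ 3 = 8) ▸ h)
    obtain ⟨c, hc⟩ := h4m
    have hcodd : c % 2 = 1 := by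
      by_contra h
      exact h8m ⟨c / 2, by omega⟩
    have hidx : ((K ⊓ Dsub F).subgroupOf K).index = 2 := by
      rw [Subgroup.index_eq_two_iff]
      refine ⟨⟨y, hyK⟩, fun b => ?_⟩
      by_cases hbD : (b : GL (Fin 2) F) ∈ Dsub F
      · refine Or.inr ⟨?_, ?_⟩
        · rw [Subgroup.mem_subgroupOf]; exact Subgroup.mem_inf.mpr ⟨b.2, hbD⟩
        · rw [Subgroup.mem_subgroupOf]
          intro hmem
          have hdd : ((b * ⟨y, hyK⟩ : K) : GL (Fin 2) F) ∈ Dsub F := (Subgroup.mem_inf.mp hmem).2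
          exact gl_not_diag_and_anti _ hdd (gl_diag_mul_anti hbD hyA)
      · have hbA := antiOf _ b.2 hbD
        refine Or.inl ⟨?_, ?_⟩
        · rw [Subgroup.mem_subgroupOf]
          exact Subgroup.mem_inf.mpr ⟨(b * ⟨y, hyK⟩ : K).2, gl_anti_mul_anti hbA hyA⟩
        · rw [Subgroup.mem_subgroupOf]
          intro hmem
          exact hbD (Subgroup.mem_inf.mp hmem).2
    have hcard0 : Nat.card ((K ⊓ Dsub F).subgroupOf K) * 2 = 4 * c := by
      calc Nat.card ((K ⊓ Dsub F).subgroupOf K) * 2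
          = Nat.card ((K ⊓ Dsub F).subgroupOf K) * ((K ⊓ Dsub F).subgroupOf K).index := by
            rw [hidx]
        _ = Nat.card K := Subgroup.card_mul_index _
        _ = 4 * c := by rw [hm, hc]
    have hcardL0 : Nat.card (K ⊓ Dsub F : Subgroup (GL (Fin 2) F)) = 2 * c := by
      have he : Nat.card ((K ⊓ Dsub F).subgroupOf K)
          = Nat.card (K ⊓ Dsub F : Subgroup (GL (Fin 2) F)) :=
        Nat.card_congr (Subgroup.subgroupOfEquivOfLe inf_le_left).toEquiv
      omega
    have huniq : ∀ g : GL (Fin 2) F, g ∈ K ⊓ Dsub F → g * g = 1 → g ≠ 1 → g = (y ^ u) ^ 2 := by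
      intro g hg hg2 hg1
      by_contra hne
      have hx2mem : (y ^ u) ^ 2 ∈ K ⊓ Dsub F := Subgroup.mem_inf.mpr ⟨hx2K, hx2D⟩
      have h4 : 4 ∣ Nat.card (K ⊓ Dsub F : Subgroup (GL (Fin 2) F)) :=
        klein_four_dvd _ g ((y ^ u) ^ 2) hg hx2mem
          (gl_comm_diag (Subgroup.mem_inf.mp hg).2 hx2D) hg2
          (by rw [← pow_add]; norm_num; exact hx4)
          hg1 hx2ne hne
      rw [hcardL0] at h4
      omega
    let L : Subgroup (GL (Fin 2) F) :=
      { carrier := {g | g ∈ K ⊓ Dsub F ∧ g ^ c = 1}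
        one_mem' := ⟨one_mem _, one_pow c⟩
        mul_mem' := by
          rintro a b ⟨haM, hac⟩ ⟨hbM, hbc⟩
          refine ⟨mul_mem haM hbM, ?_⟩
          have hcomm : Commute a b :=
            gl_comm_diag (Subgroup.mem_inf.mp haM).2 (Subgroup.mem_inf.mp hbM).2
          rw [hcomm.mul_pow, hac, hbc, one_mul]
        inv_mem' := by
          rintro a ⟨haM, hac⟩
          exact ⟨inv_mem haM, by rw [inv_pow, hac, inv_one]⟩ }
    have hLmem : ∀ g : GL (Fin 2) F, g ∈ L ↔ g ∈ K ⊓ Dsub F ∧ g ^ c = 1 := fun g => Iff.rfl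
    refine ⟨L, y ^ u, ?_, ?_, ?_, hxK, hxD, Or.inr hxord, ?_, ?_⟩
    · exact fun g hg => (Subgroup.mem_inf.mp ((hLmem g).mp hg).1).1
    · exact fun g hg => (Subgroup.mem_inf.mp ((hLmem g).mp hg).1).2
    · intro k hk l hl
      obtain ⟨hl0, hlc⟩ := (hLmem l).mp hl
      refine (hLmem _).mpr ⟨hconj k hk l hl0, ?_⟩
      have h := map_pow (MulAut.conj k) l c
      simp only [MulAut.conj_apply] at h
      rw [← h, hlc, mul_one, mul_inv_cancel]
    · have hdia : ∀ g : GL (Fin 2) F, g ∈ K → g ∈ Dsub F →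
          g ∈ L ⊔ Subgroup.closure {y ^ u} := by
        intro g hgK hgD
        have hgL0 : g ∈ K ⊓ Dsub F := Subgroup.mem_inf.mpr ⟨hgK, hgD⟩
        by_cases hgc : g ^ c = 1
        · exact Subgroup.mem_sup_left ((hLmem g).mpr ⟨hgL0, hgc⟩)
        · have hdvd : orderOf g ∣ 2 * c := by
            rw [← hcardL0]; exact Subgroup.orderOf_dvd_natCard _ hgL0
          have hg2c : g ^ (2 * c) = 1 := orderOf_dvd_iff_pow_eq_one.mp hdvd
          have hinv2 : (g ^ c) * (g ^ c) = 1 := by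
            rw [← pow_add, show c + c = 2 * c by ring]; exact hg2c
          have hgcL0 : g ^ c ∈ K ⊓ Dsub F := pow_mem hgL0 c
          have heq : g ^ c = (y ^ u) ^ 2 := huniq _ hgcL0 hinv2 hgc
          have hxc : ((y ^ u) ^ 2) ^ c = (y ^ u) ^ 2 := by
            obtain ⟨w, hw⟩ : ∃ w, c = 2 * w + 1 := ⟨c / 2, by omega⟩
            rw [← pow_mul, hw, show 2 * (2 * w + 1) = 4 * w + 2 by ring, pow_add, pow_mul,
              hx4, one_pow, one_mul]
          have hhL : g * ((y ^ u) ^ 2)⁻¹ ∈ L := by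
            refine (hLmem _).mpr ⟨Subgroup.mem_inf.mpr
              ⟨mul_mem hgK (inv_mem hx2K), mul_mem hgD ((Dsub F).inv_mem hx2D)⟩, ?_⟩
            have hcm : Commute g ((y ^ u) ^ 2)⁻¹ :=
              Commute.inv_right (gl_comm_diag hgD hx2D)
            rw [hcm.mul_pow, inv_pow, hxc, heq, mul_inv_cancel]
          have hgeq : g = (g * ((y ^ u) ^ 2)⁻¹) * (y ^ u) ^ 2 := by group
          rw [hgeq]
          exact mul_mem (Subgroup.mem_sup_left hhL)
            (Subgroup.mem_sup_right (pow_mem (Subgroup.mem_closure_singleton_self _) 2))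
      apply le_antisymm
      · exact sup_le (fun g hg => (Subgroup.mem_inf.mp ((hLmem g).mp hg).1).1)
          ((Subgroup.closure_le K).mpr (Set.singleton_subset_iff.mpr hxK))
      · intro k hk
        by_cases hkD : k ∈ Dsub F
        · exact hdia k hk hkD
        · have hkA := antiOf k hk hkD
          have h1 : k * y ^ u ∈ K := mul_mem hk hxK
          have h2 : k * y ^ u ∈ Dsub F := gl_anti_mul_anti hkA hxA
          have h3 : k = (k * y ^ u) * (y ^ u)⁻¹ := by group
          rw [h3]
          exact mul_mem (hdia _ h1 h2)
            (Subgroup.mem_sup_right (inv_mem (Subgroup.mem_closure_singleton_self _)))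
    · rw [Subgroup.eq_bot_iff_forall]
      intro g hg
      rw [Subgroup.mem_inf] at hg
      obtain ⟨hgL, hgX⟩ := hg
      obtain ⟨hgL0, hgc⟩ := (hLmem g).mp hgL
      have h1 : orderOf g ∣ c := orderOf_dvd_iff_pow_eq_one.mpr hgc
      have h2 : orderOf g ∣ 4 := by
        rw [← hxord]
        exact orderOf_dvd_of_mem_zpowers (by rwa [Subgroup.zpowers_eq_closure])
      rw [show (4:ℕ) = 2 ^ 2 by norm_num] at h2
      obtain ⟨i, hi, hgi⟩ := (Nat.dvd_prime_pow Nat.prime_two).mp h2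
      match i, hgi with
      | 0, hgi => exact orderOf_eq_one_iff.mp (by simpa using hgi)
      | (i+1), hgi =>
        exfalso
        have h2d : (2:ℕ) ∣ c := dvd_trans (by rw [hgi, pow_succ]; exact ⟨2 ^ i, by ring⟩) h1
        omega
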